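/- If M is a Hilbert C*-module with a Hilbert dual, then the extension of the inner product from M to M' is unique: any two inner products on M' extending the inner product on M (and satisfying f(m) = ⟨m̂, f⟩) coincide. -/

import Mathlib

open scoped RightActions

/-- The Hilbert C⋆-module class as it stood in Mathlib (December 2024): a right `A`-module
(action of `Aᵐᵒᵖ`) with an `A`-valued inner product, `A`-linear in the second variable. -/
class CStarModuleRight (A E : Type*) [NonUnitalSemiring A] [StarRing A]
    [Module ℂ A] [AddCommGroup E] [Module ℂ E] [PartialOrder A] [SMul Aᵐᵒᵖ E] [Norm A] [Norm E]
    extends Inner A E where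
  inner_add_right {x} {y} {z} : inner x (y + z) = inner x y + inner x z
  inner_self_nonneg {x} : 0 ≤ inner x x
  inner_self {x} : inner x x = 0 ↔ x = 0
  inner_op_smul_right {a : A} {x y : E} : inner x (y <• a) = inner x y * a
  inner_smul_right_complex {z : ℂ} {x} {y} : inner x (z • y) = z • inner x y
  star_inner x y : star (inner x y) = inner y x
  norm_eq_sqrt_norm_inner_self x : ‖x‖ = √‖inner x x‖

section Defs

variable {A : Type*} [CStarAlgebra A] [PartialOrder A] [StarOrderedRing A]
variable {E : Type*} [NormedAddCommGroup E] [NormedSpace ℂ E] [SMul Aᵐᵒᵖ E] [CStarModuleRight A E]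

/-- Membership in the dual module `M'`: a bounded `A`-antilinear functional on `E`
(the functional `f` plays the role of `m ↦ ⟨m, f⟩`). -/
def IsDualFunctional (f : E → A) : Prop :=
  (∀ x y, f (x + y) = f x + f y) ∧
  (∀ (c : ℂ) (x : E), f (c • x) = (starRingEnd ℂ) c • f x) ∧
  (∀ (x : E) (a : A), f (x <• a) = star a * f x) ∧
  ∃ C : ℝ, ∀ x, ‖f x‖ ≤ C * ‖x‖

/-- The canonical image `m̂` of `m ∈ M` in the dual module: `m̂ x = ⟨x, m⟩`. -/
def mhat (m : E) : E → A := fun x => inner A x m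

/-- The right action of `A` on dual functionals: `f·a`. -/
def dualAct (f : E → A) (a : A) : E → A := fun x => f x * a

/-- The right ideal `J_f = {a ∈ A : f·a ∈ M}`. -/
def Jf (f : E → A) : Set A := {a : A | ∃ m : E, dualAct f a = mhat m}

/-- The right ideal `J_f` is essential in `A`. -/
def JfEssential (f : E → A) : Prop := ∀ a : A, (∀ j ∈ Jf f, a * j = 0) → a = 0

/-- The norm of a functional in the dual module (operator norm). -/
noncomputable def dualNorm (f : E → A) : ℝ :=
  sInf {C : ℝ | 0 ≤ C ∧ ∀ x, ‖f x‖ ≤ C * ‖x‖}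

end Defs

section DualInner

variable {A : Type*} [CStarAlgebra A] [PartialOrder A] [StarOrderedRing A]
variable {E : Type*} [NormedAddCommGroup E] [NormedSpace ℂ E] [SMul Aᵐᵒᵖ E] [CStarModuleRight A E]

/-- `inn` is an extension of the inner product of `M` to the dual module `M'`,
making `M'` a (complete) Hilbert C*-module; this is the meaning of
"`M` is a Hilbert C*-module with a Hilbert dual".  -/
structure IsDualInner (inn : (E → A) → (E → A) → A) : Prop where
  extends_inner : ∀ m n : E, inn (mhat m) (mhat n) = inner A m n
  eval : ∀ f : E → A, IsDualFunctional f → ∀ m : E, f m = inn (mhat m) f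
  add_right : ∀ f g h : E → A, inn f (g + h) = inn f g + inn f h
  act_right : ∀ (f g : E → A) (a : A), inn f (dualAct g a) = inn f g * a
  star_inn : ∀ f g : E → A, star (inn f g) = inn g f
  nonneg : ∀ f : E → A, IsDualFunctional f → 0 ≤ inn f f
  definite : ∀ f : E → A, IsDualFunctional f → inn f f = 0 → f = 0
  complete : ∀ u : ℕ → E → A, (∀ n, IsDualFunctional (u n)) →
    (∀ ε : ℝ, 0 < ε → ∃ N, ∀ p q, N ≤ p → N ≤ q → ‖inn (u p - u q) (u p - u q)‖ < ε) →
    ∃ g : E → A, IsDualFunctional g ∧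
      Filter.Tendsto (fun n => ‖inn (u n - g) (u n - g)‖) Filter.atTop (nhds 0)

end DualInner

set_option linter.unusedSectionVars false

section FlipSec
variable {A : Type*} [CStarAlgebra A] [PartialOrder A] [StarOrderedRing A]
variable {E : Type*} [NormedAddCommGroup E] [NormedSpace ℂ E] [SMul Aᵐᵒᵖ E] [CStarModuleRight A E]

namespace CStarModuleRight

lemma inner_add_left {x y z : E} : inner A (x + y) z = inner A x z + inner A y z := by
  rw [← star_inner z (x + y), inner_add_right, star_add, star_inner, star_inner]

lemma inner_op_smul_left {a : A} {x y : E} : inner A (x <• a) y = star a * inner A x y := by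
  rw [← star_inner y, inner_op_smul_right, star_mul, star_inner]

lemma inner_smul_left_complex {z : ℂ} {x y : E} : inner A (z • x) y = star z • inner A x y := by
  rw [← star_inner y, inner_smul_right_complex, star_smul, star_inner]

lemma norm_sq_eq {x : E} : ‖x‖ ^ 2 = ‖inner A x x‖ := by
  rw [norm_eq_sqrt_norm_inner_self (A := A) x, Real.sq_sqrt (norm_nonneg _)]

end CStarModuleRight

/-- Type synonym turning a right Hilbert module into a left one. -/
def FlipM (E : Type*) : Type _ := E

noncomputable section FlipInst

instance : AddCommGroup (FlipM E) := inferInstanceAs (AddCommGroup E)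
instance : Module ℂ (FlipM E) := Module.compHom E (starRingEnd ℂ)
instance : Norm (FlipM E) := inferInstanceAs (Norm E)
instance : SMul A (FlipM E) := ⟨fun a (y : E) => (y <• star a : E)⟩

instance : CStarModule A (FlipM E) where
  inner x y := inner A (show E from y) (show E from x)
  inner_add_right {x y z} := CStarModuleRight.inner_add_left (A := A) (E := E)
  inner_self_nonneg {x} := CStarModuleRight.inner_self_nonneg (A := A) (E := E)
  inner_self {x} := CStarModuleRight.inner_self (A := A) (E := E)
  inner_op_smul_right {a x y} := by
    show inner A ((show E from y) <• star a) (show E from x) = a * inner A (show E from y) (show E from x)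
    rw [CStarModuleRight.inner_op_smul_left, star_star]
  inner_smul_right_complex {z x y} := by
    show inner A ((starRingEnd ℂ z) • (show E from y)) (show E from x) = z • inner A (show E from y) (show E from x)
    rw [CStarModuleRight.inner_smul_left_complex, starRingEnd_apply, star_star]
  star_inner x y := CStarModuleRight.star_inner (A := A) (show E from y) (show E from x)
  norm_eq_sqrt_norm_inner_self x := CStarModuleRight.norm_eq_sqrt_norm_inner_self (A := A) (show E from x)

end FlipInst

variable (E) in
lemma CStarModuleRight.norm_inner_le {x y : E} : ‖inner A x y‖ ≤ ‖x‖ * ‖y‖ := by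
  have := CStarModule.norm_inner_le (A := A) (FlipM E) (x := (show FlipM E from y)) (y := (show FlipM E from x))
  rw [mul_comm]
  exact this

end FlipSec

section Basic
variable {A : Type*} [CStarAlgebra A] [PartialOrder A] [StarOrderedRing A]
variable {E : Type*} [NormedAddCommGroup E] [NormedSpace ℂ E] [SMul Aᵐᵒᵖ E] [CStarModuleRight A E]

lemma isDual_mhat (m : E) : IsDualFunctional (mhat (A := A) m) := by
  refine ⟨fun x y => ?_, fun c x => ?_, fun x a => ?_, ⟨‖m‖, fun x => ?_⟩⟩
  · simp only [mhat, CStarModuleRight.inner_add_left]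
  · simp only [mhat, CStarModuleRight.inner_smul_left_complex, starRingEnd_apply]
  · simp only [mhat, CStarModuleRight.inner_op_smul_left]
  · simpa [mhat, mul_comm] using CStarModuleRight.norm_inner_le E (x := x) (y := m)

lemma IsDualFunctional.add {f g : E → A} (hf : IsDualFunctional f) (hg : IsDualFunctional g) :
    IsDualFunctional (f + g) := by
  obtain ⟨f1, f2, f3, Cf, f4⟩ := hf
  obtain ⟨g1, g2, g3, Cg, g4⟩ := hg
  refine ⟨fun x y => ?_, fun c x => ?_, fun x a => ?_, ⟨Cf + Cg, fun x => ?_⟩⟩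
  · simp only [Pi.add_apply, f1, g1]; abel
  · simp only [Pi.add_apply, f2, g2, smul_add]
  · simp only [Pi.add_apply, f3, g3, mul_add]
  · calc ‖f x + g x‖ ≤ ‖f x‖ + ‖g x‖ := norm_add_le _ _
      _ ≤ Cf * ‖x‖ + Cg * ‖x‖ := add_le_add (f4 x) (g4 x)
      _ = (Cf + Cg) * ‖x‖ := by ring

lemma IsDualFunctional.dualAct {f : E → A} (hf : IsDualFunctional f) (a : A) :
    IsDualFunctional (dualAct f a) := by
  obtain ⟨f1, f2, f3, Cf, f4⟩ := hf
  refine ⟨fun x y => ?_, fun c x => ?_, fun x b => ?_, ⟨Cf * ‖a‖, fun x => ?_⟩⟩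
  · simp only [_root_.dualAct, f1, add_mul]
  · simp only [_root_.dualAct, f2, smul_mul_assoc]
  · simp only [_root_.dualAct, f3, mul_assoc]
  · calc ‖f x * a‖ ≤ ‖f x‖ * ‖a‖ := norm_mul_le _ _
      _ ≤ Cf * ‖x‖ * ‖a‖ := by
        have := f4 x
        have h0 : (0:ℝ) ≤ ‖a‖ := norm_nonneg a
        nlinarith [norm_nonneg (f x)]
      _ = Cf * ‖a‖ * ‖x‖ := by ring

lemma IsDualFunctional.zero : IsDualFunctional (0 : E → A) := by
  refine ⟨by simp, by simp, by simp, ⟨0, by simp⟩⟩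

lemma IsDualFunctional.neg {f : E → A} (hf : IsDualFunctional f) : IsDualFunctional (-f) := by
  obtain ⟨f1, f2, f3, Cf, f4⟩ := hf
  exact ⟨fun x y => by simp [f1]; abel, fun c x => by simp [f2],
    fun x a => by simp [f3], ⟨Cf, fun x => by simpa using f4 x⟩⟩

lemma IsDualFunctional.sub {f g : E → A} (hf : IsDualFunctional f) (hg : IsDualFunctional g) :
    IsDualFunctional (f - g) := by
  simpa [sub_eq_add_neg] using hf.add hg.neg

lemma IsDualFunctional.csmul {f : E → A} (hf : IsDualFunctional f) (c : ℂ) :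
    IsDualFunctional (fun x => c • f x) := by
  obtain ⟨f1, f2, f3, Cf, f4⟩ := hf
  refine ⟨fun x y => by simp [f1], fun c' x => by simp [f2, smul_comm c], fun x a => ?_,
    ⟨‖c‖ * Cf, fun x => ?_⟩⟩
  · simp only [f3, mul_smul_comm]
  · calc ‖c • f x‖ = ‖c‖ * ‖f x‖ := norm_smul _ _
      _ ≤ ‖c‖ * (Cf * ‖x‖) := by
        have := f4 x
        have : ‖f x‖ ≤ Cf * ‖x‖ := this
        nlinarith [norm_nonneg c]
      _ = ‖c‖ * Cf * ‖x‖ := by ring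

lemma csmul_eq_dualAct {f : E → A} (c : ℂ) : (fun x => c • f x) = dualAct f (c • (1:A)) := by
  funext x
  simp [dualAct, mul_smul_comm]

end Basic

section OrderHelpers
variable {A : Type*} [CStarAlgebra A] [PartialOrder A] [StarOrderedRing A]

lemma rsmul_conj (t : ℝ) (x : A) :
    (Real.sqrt t • (1:A)) * x * (Real.sqrt t • (1:A)) = (Real.sqrt t * Real.sqrt t) • x := by
  rw [smul_mul_assoc, mul_smul_comm, one_mul, mul_one, smul_smul]

lemma rsmul_nonneg {t : ℝ} (ht : 0 ≤ t) {x : A} (hx : 0 ≤ x) : 0 ≤ t • x := by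
  have h : t • x = star (Real.sqrt t • (1:A)) * x * (Real.sqrt t • (1:A)) := by
    rw [star_smul, star_one, star_trivial, rsmul_conj, Real.mul_self_sqrt ht]
  rw [h]
  exact star_left_conjugate_nonneg hx _

lemma rsmul_le_rsmul {t : ℝ} (ht : 0 ≤ t) {x y : A} (hxy : x ≤ y) : t • x ≤ t • y := by
  rw [← sub_nonneg, ← smul_sub]
  exact rsmul_nonneg ht (by rwa [sub_nonneg])

end OrderHelpers

section Form
variable {A : Type*} [CStarAlgebra A] [PartialOrder A] [StarOrderedRing A]
variable {E : Type*} [NormedAddCommGroup E] [NormedSpace ℂ E] [SMul Aᵐᵒᵖ E] [CStarModuleRight A E]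

/-- The properties of an inner-product-like form on the dual module that we need. -/
structure GoodForm (B : (E → A) → (E → A) → A) : Prop where
  add_right : ∀ f g h : E → A, B f (g + h) = B f g + B f h
  act_right : ∀ (f g : E → A) (a : A), B f (dualAct g a) = B f g * a
  star_inn : ∀ f g : E → A, star (B f g) = B g f
  nonneg : ∀ f : E → A, IsDualFunctional f → 0 ≤ B f f
  evalB : ∀ f : E → A, IsDualFunctional f → ∀ m : E, f m = B (mhat m) f

namespace GoodForm

variable {B : (E → A) → (E → A) → A} (hB : GoodForm B)

include hB

lemma add_left (f g h : E → A) : B (f + g) h = B f h + B g h := by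
  rw [← hB.star_inn, hB.add_right, star_add, hB.star_inn, hB.star_inn]

lemma zero_right (f : E → A) : B f 0 = 0 := by
  have := hB.add_right f 0 0
  simpa using this.symm

lemma act_left (f g : E → A) (a : A) : B (dualAct f a) g = star a * B f g := by
  rw [← hB.star_inn, hB.act_right, star_mul, hB.star_inn]

lemma act_pair (f g : E → A) (a b : A) :
    B (dualAct f a) (dualAct g b) = star a * B f g * b := by
  rw [hB.act_right, hB.act_left, mul_assoc]

lemma self_sa (f : E → A) : IsSelfAdjoint (B f f) := hB.star_inn f f

lemma extends' (m : E) : B (mhat m) (mhat m) = inner A m m := by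
  exact (hB.evalB (mhat m) (isDual_mhat m) m).symm

lemma expand_sq (x y : E → A) :
    B (x + y) (x + y) = B x x + B x y + B y x + B y y := by
  rw [hB.add_left, hB.add_right, hB.add_right]
  abel

/-- Cauchy–Schwarz for the form `B` on dual functionals. -/
lemma cs {f g : E → A} (hf : IsDualFunctional f) (hg : IsDualFunctional g) :
    ‖B f g‖ ^ 2 ≤ ‖B f f‖ * ‖B g g‖ := by
  have key : ∀ t : ℝ, 0 < t →
      2 * t * ‖B f g‖ ^ 2 ≤ ‖B f g‖ ^ 2 * ‖B f f‖ + t ^ 2 * ‖B g g‖ := by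
    intro t ht
    have hstar_s : star ((-t) • (1:A)) = (-t) • (1:A) := by
      rw [star_smul, star_one, star_trivial]
    have e1 : B (dualAct f (B f g)) (dualAct f (B f g))
        = star (B f g) * B f f * (B f g) := hB.act_pair f f _ _
    have e2 : B (dualAct f (B f g)) (dualAct g ((-t) • (1:A)))
        = (-t) • (star (B f g) * B f g) := by
      rw [hB.act_pair, mul_smul_comm, mul_one]
    have e3 : B (dualAct g ((-t) • (1:A))) (dualAct f (B f g))
        = (-t) • (star (B f g) * B f g) := by
      rw [hB.act_pair, hstar_s, smul_mul_assoc, smul_mul_assoc, one_mul, ← hB.star_inn f g]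
    have e4 : B (dualAct g ((-t) • (1:A))) (dualAct g ((-t) • (1:A)))
        = (t ^ 2) • B g g := by
      rw [hB.act_pair, hstar_s, smul_mul_assoc, mul_smul_comm, one_mul, mul_one, smul_smul]
      norm_num [pow_two]
    have h0 : (0:A) ≤ B (dualAct f (B f g) + dualAct g ((-t) • (1:A)))
        (dualAct f (B f g) + dualAct g ((-t) • (1:A))) :=
      hB.nonneg _ ((hf.dualAct _).add (hg.dualAct _))
    rw [hB.expand_sq, e1, e2, e3, e4] at h0
    have key0 : (2 * t) • (star (B f g) * B f g)
        ≤ star (B f g) * B f f * (B f g) + (t ^ 2) • B g g := by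
      rw [← sub_nonneg]
      have heq : star (B f g) * B f f * B f g + t ^ 2 • B g g - (2 * t) • (star (B f g) * B f g)
          = star (B f g) * B f f * B f g + (-t) • (star (B f g) * B f g)
            + (-t) • (star (B f g) * B f g) + t ^ 2 • B g g := by
        module
      rw [heq]
      exact h0
    have hLnn : (0:A) ≤ (2 * t) • (star (B f g) * B f g) :=
      rsmul_nonneg (by linarith) (star_mul_self_nonneg _)
    have hnorm1 : ‖(2 * t) • (star (B f g) * B f g)‖ = 2 * t * ‖B f g‖ ^ 2 := by
      rw [norm_smul, Real.norm_of_nonneg (by linarith : (0:ℝ) ≤ 2 * t),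
        CStarRing.norm_star_mul_self, pow_two]
    have hnorm2 : ‖star (B f g) * B f f * (B f g) + (t ^ 2) • B g g‖
        ≤ ‖B f g‖ ^ 2 * ‖B f f‖ + t ^ 2 * ‖B g g‖ := by
      refine (norm_add_le _ _).trans (add_le_add ?_ ?_)
      · calc ‖star (B f g) * B f f * (B f g)‖ ≤ ‖star (B f g) * B f f‖ * ‖B f g‖ :=
            norm_mul_le _ _
          _ ≤ ‖star (B f g)‖ * ‖B f f‖ * ‖B f g‖ := by
            have := norm_mul_le (star (B f g)) (B f f)
            have h0 : (0:ℝ) ≤ ‖B f g‖ := norm_nonneg _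
            nlinarith
          _ = ‖B f g‖ ^ 2 * ‖B f f‖ := by rw [norm_star]; ring
      · rw [norm_smul, Real.norm_of_nonneg (sq_nonneg t)]
    calc 2 * t * ‖B f g‖ ^ 2 = ‖(2 * t) • (star (B f g) * B f g)‖ := hnorm1.symm
      _ ≤ ‖star (B f g) * B f f * (B f g) + (t ^ 2) • B g g‖ :=
        CStarAlgebra.norm_le_norm_of_nonneg_of_le hLnn key0
      _ ≤ ‖B f g‖ ^ 2 * ‖B f f‖ + t ^ 2 * ‖B g g‖ := hnorm2
  by_cases hc : ‖B f g‖ = 0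
  · rw [hc]
    norm_num
    positivity
  have hcpos : 0 < ‖B f g‖ := lt_of_le_of_ne (norm_nonneg _) (Ne.symm hc)
  by_cases hq0 : ‖B g g‖ = 0
  · exfalso
    have := key (‖B f f‖ + 1) (by positivity)
    rw [hq0] at this
    nlinarith [sq_nonneg (‖B f g‖), norm_nonneg (B f f)]
  have hqpos : 0 < ‖B g g‖ := lt_of_le_of_ne (norm_nonneg _) (Ne.symm hq0)
  have := key (‖B f g‖ ^ 2 / ‖B g g‖) (by positivity)
  have h2 : (‖B f g‖ ^ 2 / ‖B g g‖) ^ 2 * ‖B g g‖ = ‖B f g‖ ^ 4 / ‖B g g‖ := by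
    field_simp
  rw [h2] at this
  have h3 : ‖B f g‖ ^ 4 / ‖B g g‖ ≤ ‖B f g‖ ^ 2 * ‖B f f‖ := by
    have h4 : 2 * (‖B f g‖ ^ 2 / ‖B g g‖) * ‖B f g‖ ^ 2 = 2 * (‖B f g‖ ^ 4 / ‖B g g‖) := by
      field_simp
    rw [h4] at this
    linarith
  have h5 : ‖B f g‖ ^ 4 ≤ ‖B f g‖ ^ 2 * ‖B f f‖ * ‖B g g‖ := by
    rw [div_le_iff₀ hqpos] at h3
    linarith
  nlinarith [h5, pow_pos hcpos 2]

end GoodForm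
end Form

section DualNormLemmas
variable {A : Type*} [CStarAlgebra A] [PartialOrder A] [StarOrderedRing A]
variable {E : Type*} [NormedAddCommGroup E] [NormedSpace ℂ E] [SMul Aᵐᵒᵖ E] [CStarModuleRight A E]

lemma dualNorm_set_nonempty {f : E → A} (hf : IsDualFunctional f) :
    {C : ℝ | 0 ≤ C ∧ ∀ x, ‖f x‖ ≤ C * ‖x‖}.Nonempty := by
  obtain ⟨-, -, -, C, hC⟩ := hf
  exact ⟨max C 0, le_max_right _ _, fun x =>
    (hC x).trans (mul_le_mul_of_nonneg_right (le_max_left _ _) (norm_nonneg _))⟩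

lemma dualNorm_set_bddBelow (f : E → A) :
    BddBelow {C : ℝ | 0 ≤ C ∧ ∀ x, ‖f x‖ ≤ C * ‖x‖} :=
  ⟨0, fun _ hy => hy.1⟩

lemma dualNorm_nonneg (f : E → A) : 0 ≤ dualNorm f :=
  Real.sInf_nonneg (fun _ hx => hx.1)

lemma IsDualFunctional.map_zero {f : E → A} (hf : IsDualFunctional f) : f 0 = 0 := by
  have := hf.1 0 0
  simpa using this.symm

lemma norm_apply_le_dualNorm {f : E → A} (hf : IsDualFunctional f) (x : E) :
    ‖f x‖ ≤ dualNorm f * ‖x‖ := by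
  rcases eq_or_ne x 0 with rfl | hx
  · simp [hf.map_zero]
  have hxpos : 0 < ‖x‖ := norm_pos_iff.mpr hx
  have hstep : ∀ ε : ℝ, 0 < ε → ‖f x‖ ≤ dualNorm f * ‖x‖ + ε := by
    intro ε hε
    obtain ⟨c, hcS, hclt⟩ := Real.lt_sInf_add_pos (dualNorm_set_nonempty hf)
      (show (0:ℝ) < ε / ‖x‖ by positivity)
    calc ‖f x‖ ≤ c * ‖x‖ := hcS.2 x
      _ ≤ (dualNorm f + ε / ‖x‖) * ‖x‖ :=
        mul_le_mul_of_nonneg_right hclt.le (norm_nonneg _)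
      _ = dualNorm f * ‖x‖ + ε := by field_simp
  exact le_of_forall_pos_le_add hstep

lemma dualNorm_le {f : E → A} {C : ℝ} (hC : 0 ≤ C) (h : ∀ x, ‖f x‖ ≤ C * ‖x‖) :
    dualNorm f ≤ C :=
  csInf_le (dualNorm_set_bddBelow f) ⟨hC, h⟩

lemma dualNorm_eq_zero {f : E → A} (hf : IsDualFunctional f) (h : dualNorm f = 0) :
    f = 0 := by
  funext x
  have := norm_apply_le_dualNorm hf x
  rw [h, zero_mul] at this
  simpa using le_antisymm this (norm_nonneg _)

end DualNormLemmas

namespace GoodForm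
variable {A : Type*} [CStarAlgebra A] [PartialOrder A] [StarOrderedRing A]
variable {E : Type*} [NormedAddCommGroup E] [NormedSpace ℂ E] [SMul Aᵐᵒᵖ E] [CStarModuleRight A E]
variable {B : (E → A) → (E → A) → A} (hB : GoodForm B)

include hB

lemma norm_cs {f g : E → A} (hf : IsDualFunctional f) (hg : IsDualFunctional g) :
    ‖B f g‖ ≤ Real.sqrt ‖B f f‖ * Real.sqrt ‖B g g‖ := by
  have h := hB.cs hf hg
  calc ‖B f g‖ = Real.sqrt (‖B f g‖ ^ 2) := (Real.sqrt_sq (norm_nonneg _)).symm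
    _ ≤ Real.sqrt (‖B f f‖ * ‖B g g‖) := Real.sqrt_le_sqrt h
    _ = Real.sqrt ‖B f f‖ * Real.sqrt ‖B g g‖ := Real.sqrt_mul (norm_nonneg _) _

lemma apply_le {g : E → A} (hg : IsDualFunctional g) (m : E) :
    ‖g m‖ ≤ ‖m‖ * Real.sqrt ‖B g g‖ := by
  have h1 : B (mhat m) g = g m := (hB.evalB g hg m).symm
  have h2 : ‖B (mhat m) (mhat m)‖ = ‖m‖ ^ 2 := by
    rw [hB.extends']
    exact (CStarModuleRight.norm_sq_eq (A := A)).symm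
  calc ‖g m‖ = ‖B (mhat m) g‖ := by rw [h1]
    _ ≤ Real.sqrt ‖B (mhat m) (mhat m)‖ * Real.sqrt ‖B g g‖ :=
      hB.norm_cs (isDual_mhat m) hg
    _ = ‖m‖ * Real.sqrt ‖B g g‖ := by
      rw [h2, Real.sqrt_sq (norm_nonneg m)]

lemma dualNorm_le_sqrt {g : E → A} (hg : IsDualFunctional g) :
    dualNorm g ≤ Real.sqrt ‖B g g‖ :=
  dualNorm_le (Real.sqrt_nonneg _) (fun x => by
    simpa [mul_comm] using hB.apply_le hg x)

lemma sqrt_add_le {f g : E → A} (hf : IsDualFunctional f) (hg : IsDualFunctional g) :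
    Real.sqrt ‖B (f + g) (f + g)‖ ≤ Real.sqrt ‖B f f‖ + Real.sqrt ‖B g g‖ := by
  have hnorm : ‖B (f + g) (f + g)‖
      ≤ (Real.sqrt ‖B f f‖ + Real.sqrt ‖B g g‖) ^ 2 := by
    rw [hB.expand_sq]
    have hgf : ‖B g f‖ = ‖B f g‖ := by rw [← hB.star_inn f g, norm_star]
    have h1 : ‖B f f + B f g + B g f + B g g‖
        ≤ ‖B f f‖ + ‖B f g‖ + ‖B g f‖ + ‖B g g‖ := by
      calc ‖B f f + B f g + B g f + B g g‖
          ≤ ‖B f f + B f g + B g f‖ + ‖B g g‖ := norm_add_le _ _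
        _ ≤ ‖B f f + B f g‖ + ‖B g f‖ + ‖B g g‖ := by
            have := norm_add_le (B f f + B f g) (B g f); linarith
        _ ≤ ‖B f f‖ + ‖B f g‖ + ‖B g f‖ + ‖B g g‖ := by
            have := norm_add_le (B f f) (B f g); linarith
    have h2 : ‖B f g‖ ≤ Real.sqrt ‖B f f‖ * Real.sqrt ‖B g g‖ := hB.norm_cs hf hg
    have h3 : ‖B f f‖ = Real.sqrt ‖B f f‖ ^ 2 := (Real.sq_sqrt (norm_nonneg _)).symm
    have h4 : ‖B g g‖ = Real.sqrt ‖B g g‖ ^ 2 := (Real.sq_sqrt (norm_nonneg _)).symm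
    nlinarith [Real.sqrt_nonneg ‖B f f‖, Real.sqrt_nonneg ‖B g g‖]
  calc Real.sqrt ‖B (f + g) (f + g)‖
      ≤ Real.sqrt ((Real.sqrt ‖B f f‖ + Real.sqrt ‖B g g‖) ^ 2) := Real.sqrt_le_sqrt hnorm
    _ = Real.sqrt ‖B f f‖ + Real.sqrt ‖B g g‖ := Real.sqrt_sq (by positivity)

lemma self_act (f : E → A) (a : A) :
    B (dualAct f a) (dualAct f a) = star a * B f f * a := hB.act_pair f f a a

end GoodForm

section DualInnerDef
variable {A : Type*} [CStarAlgebra A] [PartialOrder A] [StarOrderedRing A]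
variable {E : Type*} [NormedAddCommGroup E] [NormedSpace ℂ E] [SMul Aᵐᵒᵖ E] [CStarModuleRight A E]

lemma IsDualInner.good {inn : (E → A) → (E → A) → A} (h : IsDualInner inn) : GoodForm inn :=
  ⟨h.add_right, h.act_right, h.star_inn, h.nonneg, h.eval⟩

end DualInnerDef

section DFunDef
variable (A : Type*) [CStarAlgebra A] [PartialOrder A] [StarOrderedRing A]
variable (E : Type*) [NormedAddCommGroup E] [NormedSpace ℂ E] [SMul Aᵐᵒᵖ E] [CStarModuleRight A E]

/-- The dual module, as a subtype. -/
def DFun : Type _ := {f : E → A // IsDualFunctional f}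

/-- Type synonym for the dual module with the operator norm. -/
def DOp : Type _ := DFun A E

variable {A E}

/-- Type synonym for the dual module with the norm coming from `inn`. -/
def DN (_inn : (E → A) → (E → A) → A) : Type _ := DFun A E

namespace DFun

instance : Add (DFun A E) := ⟨fun f g => ⟨f.1 + g.1, f.2.add g.2⟩⟩
instance : Zero (DFun A E) := ⟨⟨0, IsDualFunctional.zero⟩⟩
instance : Neg (DFun A E) := ⟨fun f => ⟨-f.1, f.2.neg⟩⟩
instance : Sub (DFun A E) := ⟨fun f g => ⟨f.1 - g.1, f.2.sub g.2⟩⟩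
instance : SMul ℂ (DFun A E) := ⟨fun c f => ⟨fun x => c • f.1 x, f.2.csmul c⟩⟩

lemma nsmul_mem (n : ℕ) {f : E → A} (hf : IsDualFunctional f) :
    IsDualFunctional (n • f) := by
  have := hf.csmul (n : ℂ)
  convert this using 1
  funext x
  simp only [Pi.smul_apply]
  rw [← Nat.cast_smul_eq_nsmul ℂ]

lemma zsmul_mem (n : ℤ) {f : E → A} (hf : IsDualFunctional f) :
    IsDualFunctional (n • f) := by
  have := hf.csmul (n : ℂ)
  convert this using 1
  funext x
  simp only [Pi.smul_apply]
  rw [← Int.cast_smul_eq_zsmul ℂ]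

instance : SMul ℕ (DFun A E) := ⟨fun n f => ⟨n • f.1, nsmul_mem n f.2⟩⟩
instance : SMul ℤ (DFun A E) := ⟨fun n f => ⟨n • f.1, zsmul_mem n f.2⟩⟩

instance : AddCommGroup (DFun A E) :=
  Function.Injective.addCommGroup (fun f : DFun A E => f.1) Subtype.val_injective
    rfl (fun _ _ => rfl) (fun _ => rfl) (fun _ _ => rfl) (fun _ _ => rfl) (fun _ _ => rfl)

/-- `Subtype.val` as an additive monoid hom. -/
def valHom : DFun A E →+ (E → A) where
  toFun := Subtype.val
  map_zero' := rfl
  map_add' _ _ := rfl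

noncomputable instance : Module ℂ (DFun A E) :=
  Function.Injective.module ℂ (valHom) Subtype.val_injective (fun _ _ => rfl)

@[simp] lemma val_add (f g : DFun A E) : (f + g).1 = f.1 + g.1 := rfl
@[simp] lemma val_sub (f g : DFun A E) : (f - g).1 = f.1 - g.1 := rfl
@[simp] lemma val_zero : (0 : DFun A E).1 = 0 := rfl
@[simp] lemma val_smul (c : ℂ) (f : DFun A E) : (c • f).1 = fun x => c • f.1 x := rfl

end DFun

instance : AddCommGroup (DOp A E) := inferInstanceAs (AddCommGroup (DFun A E))
instance : Module ℂ (DOp A E) := inferInstanceAs (Module ℂ (DFun A E))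

instance (inn : (E → A) → (E → A) → A) : AddCommGroup (DN inn) :=
  inferInstanceAs (AddCommGroup (DFun A E))
instance (inn : (E → A) → (E → A) → A) : Module ℂ (DN inn) :=
  inferInstanceAs (Module ℂ (DFun A E))

end DFunDef

namespace DOp
variable {A : Type*} [CStarAlgebra A] [PartialOrder A] [StarOrderedRing A]
variable {E : Type*} [NormedAddCommGroup E] [NormedSpace ℂ E] [SMul Aᵐᵒᵖ E] [CStarModuleRight A E]

lemma dualNorm_zero : dualNorm (0 : E → A) = 0 :=
  le_antisymm (dualNorm_le le_rfl (by simp)) (dualNorm_nonneg _)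

noncomputable instance : NormedAddCommGroup (DOp A E) :=
  AddGroupNorm.toNormedAddCommGroup
    { toFun := fun f => dualNorm f.1
      map_zero' := dualNorm_zero
      add_le' := fun f g => dualNorm_le
        (add_nonneg (dualNorm_nonneg _) (dualNorm_nonneg _))
        (fun x => by
          calc ‖(f.1 + g.1) x‖ ≤ ‖f.1 x‖ + ‖g.1 x‖ := norm_add_le _ _
            _ ≤ dualNorm f.1 * ‖x‖ + dualNorm g.1 * ‖x‖ :=
              add_le_add (norm_apply_le_dualNorm f.2 x) (norm_apply_le_dualNorm g.2 x)
            _ = (dualNorm f.1 + dualNorm g.1) * ‖x‖ := by ring)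
      neg' := fun f => by
        have : {C : ℝ | 0 ≤ C ∧ ∀ x, ‖(-f.1) x‖ ≤ C * ‖x‖}
            = {C : ℝ | 0 ≤ C ∧ ∀ x, ‖f.1 x‖ ≤ C * ‖x‖} := by
          ext C; simp
        show dualNorm (-f.1) = dualNorm f.1
        unfold dualNorm
        rw [this]
      eq_zero_of_map_eq_zero' := fun f hf =>
        Subtype.ext (dualNorm_eq_zero f.2 hf) }

@[simp] lemma norm_def (f : DOp A E) : ‖f‖ = dualNorm f.1 := rfl

noncomputable instance : NormedSpace ℂ (DOp A E) where
  norm_smul_le c f := by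
    rw [norm_def, norm_def]
    refine dualNorm_le (mul_nonneg (norm_nonneg _) (dualNorm_nonneg _)) (fun x => ?_)
    calc ‖c • f.1 x‖ = ‖c‖ * ‖f.1 x‖ := norm_smul _ _
      _ ≤ ‖c‖ * (dualNorm f.1 * ‖x‖) :=
        mul_le_mul_of_nonneg_left (norm_apply_le_dualNorm f.2 x) (norm_nonneg _)
      _ = ‖c‖ * dualNorm f.1 * ‖x‖ := by ring

instance : CompleteSpace (DOp A E) := by
  apply Metric.complete_of_cauchySeq_tendsto
  intro u hu
  rw [Metric.cauchySeq_iff] at hu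
  -- pointwise Cauchy
  have hpt : ∀ x : E, ∃ y : A, Filter.Tendsto (fun n => (u n).1 x) Filter.atTop (nhds y) := by
    intro x
    apply cauchySeq_tendsto_of_complete
    rw [Metric.cauchySeq_iff]
    intro ε hε
    obtain ⟨N, hN⟩ := hu (ε / (‖x‖ + 1)) (by positivity)
    refine ⟨N, fun m hm n hn => ?_⟩
    have h1 := hN m hm n hn
    have h2 : dist ((u m).1 x) ((u n).1 x) ≤ dist (u m) (u n) * ‖x‖ := by
      rw [dist_eq_norm, dist_eq_norm]
      have : (u m).1 x - (u n).1 x = ((u m) - (u n)).1 x := rfl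
      rw [this]
      exact norm_apply_le_dualNorm ((u m) - (u n)).2 x
    have h3 : dist (u m) (u n) * ‖x‖ ≤ dist (u m) (u n) * (‖x‖ + 1) := by
      have := dist_nonneg (x := u m) (y := u n)
      nlinarith
    calc dist ((u m).1 x) ((u n).1 x) ≤ dist (u m) (u n) * (‖x‖ + 1) := le_trans h2 h3
      _ < (ε / (‖x‖ + 1)) * (‖x‖ + 1) := by
        apply mul_lt_mul_of_pos_right h1
        positivity
      _ = ε := by field_simp
  choose g hg using hpt
  -- the limit is a dual functional
  have hgd : IsDualFunctional g := by
    refine ⟨fun x y => ?_, fun c x => ?_, fun x a => ?_, ?_⟩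
    · refine tendsto_nhds_unique (hg (x + y)) ?_
      have : ∀ n, (u n).1 (x + y) = (u n).1 x + (u n).1 y := fun n => (u n).2.1 x y
      simp_rw [this]
      exact (hg x).add (hg y)
    · refine tendsto_nhds_unique (hg (c • x)) ?_
      have : ∀ n, (u n).1 (c • x) = (starRingEnd ℂ) c • (u n).1 x :=
        fun n => (u n).2.2.1 c x
      simp_rw [this]
      exact (hg x).const_smul _
    · refine tendsto_nhds_unique (hg (x <• a)) ?_
      have : ∀ n, (u n).1 (x <• a) = star a * (u n).1 x := fun n => (u n).2.2.2.1 x a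
      simp_rw [this]
      exact (hg x).const_mul _
    · obtain ⟨N, hN⟩ := hu 1 one_pos
      refine ⟨dualNorm (u N).1 + 1, fun x => ?_⟩
      have hb : ∀ n, N ≤ n → ‖(u n).1 x‖ ≤ (dualNorm (u N).1 + 1) * ‖x‖ := by
        intro n hn
        have h1 : ‖(u n).1 x - (u N).1 x‖ ≤ 1 * ‖x‖ := by
          have : (u n).1 x - (u N).1 x = ((u n) - (u N)).1 x := rfl
          rw [this]
          refine (norm_apply_le_dualNorm ((u n) - (u N)).2 x).trans ?_
          apply mul_le_mul_of_nonneg_right _ (norm_nonneg _)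
          have := hN n hn N le_rfl
          rw [dist_eq_norm] at this
          exact le_of_lt this
        have h2 : ‖(u N).1 x‖ ≤ dualNorm (u N).1 * ‖x‖ := norm_apply_le_dualNorm (u N).2 x
        have h3 : (u n).1 x = ((u n).1 x - (u N).1 x) + (u N).1 x := (sub_add_cancel _ _).symm
        calc ‖(u n).1 x‖ = ‖((u n).1 x - (u N).1 x) + (u N).1 x‖ := by rw [← h3]
          _ ≤ ‖(u n).1 x - (u N).1 x‖ + ‖(u N).1 x‖ := norm_add_le _ _
          _ ≤ 1 * ‖x‖ + dualNorm (u N).1 * ‖x‖ := add_le_add h1 h2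
          _ = (dualNorm (u N).1 + 1) * ‖x‖ := by ring
      have : Filter.Tendsto (fun n => ‖(u n).1 x‖) Filter.atTop (nhds ‖g x‖) :=
        (hg x).norm
      refine le_of_tendsto this ?_
      filter_upwards [Filter.eventually_ge_atTop N] with n hn using hb n hn
  -- convergence in the dual norm
  refine ⟨⟨g, hgd⟩, ?_⟩
  refine Metric.tendsto_atTop.mpr ?_
  intro ε hε
  obtain ⟨N, hN⟩ := hu (ε / 2) (by positivity)
  refine ⟨N, fun n hn => ?_⟩
  have key : dualNorm ((u n).1 - g) ≤ ε / 2 := by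
    refine dualNorm_le (by positivity) (fun x => ?_)
    have hlim : Filter.Tendsto (fun m => ‖(u n).1 x - (u m).1 x‖) Filter.atTop
        (nhds ‖(u n).1 x - g x‖) := by
      exact ((tendsto_const_nhds).sub (hg x)).norm
    refine le_of_tendsto hlim ?_
    filter_upwards [Filter.eventually_ge_atTop N] with m hm
    have h1 := hN n hn m hm
    have h2 : ‖(u n).1 x - (u m).1 x‖ ≤ dist (u n) (u m) * ‖x‖ := by
      rw [dist_eq_norm]
      have : (u n).1 x - (u m).1 x = ((u n) - (u m)).1 x := rfl
      rw [this]
      exact norm_apply_le_dualNorm ((u n) - (u m)).2 x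
    calc ‖(u n).1 x - (u m).1 x‖ ≤ dist (u n) (u m) * ‖x‖ := h2
      _ ≤ (ε / 2) * ‖x‖ := mul_le_mul_of_nonneg_right (le_of_lt h1) (norm_nonneg _)
  have : dist (u n) ⟨g, hgd⟩ = dualNorm ((u n).1 - g) := by
    exact (dist_eq_norm _ _).trans rfl
  rw [this]
  linarith

end DOp

section Banach
variable {A : Type*} [CStarAlgebra A] [PartialOrder A] [StarOrderedRing A]
variable {E : Type*} [NormedAddCommGroup E] [NormedSpace ℂ E] [SMul Aᵐᵒᵖ E] [CStarModuleRight A E]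

lemma exists_opbound {inn : (E → A) → (E → A) → A} (h : IsDualInner inn) :
    ∃ K : ℝ, 0 < K ∧ ∀ f : E → A, IsDualFunctional f →
      Real.sqrt ‖inn f f‖ ≤ K * dualNorm f := by
  have hB : GoodForm inn := h.good
  letI : NormedAddCommGroup (DN inn) :=
    AddGroupNorm.toNormedAddCommGroup
      { toFun := fun f => Real.sqrt ‖inn f.1 f.1‖
        map_zero' := by
          have h0 : inn (0 : E → A) (0 : E → A) = 0 := hB.zero_right 0
          show Real.sqrt ‖inn (0 : E → A) (0 : E → A)‖ = 0
          rw [h0, norm_zero, Real.sqrt_zero]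
        add_le' := fun f g => hB.sqrt_add_le f.2 g.2
        neg' := fun f => by
          show Real.sqrt ‖inn (-f.1) (-f.1)‖ = Real.sqrt ‖inn f.1 f.1‖
          have hneg : -f.1 = dualAct f.1 (-(1:A)) := funext fun x => by
            simp [dualAct]
          rw [hneg, hB.self_act]
          congr 2
          simp
        eq_zero_of_map_eq_zero' := fun f hf => by
          have h1 : ‖inn f.1 f.1‖ = 0 := by
            have h2 := Real.sqrt_eq_zero'.mp hf
            exact le_antisymm h2 (norm_nonneg _)
          exact Subtype.ext (h.definite f.1 f.2 (norm_eq_zero.mp h1)) }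
  have norm_def : ∀ f : DN inn, ‖f‖ = Real.sqrt ‖inn f.1 f.1‖ := fun _ => rfl
  letI : NormedSpace ℂ (DN inn) := by
    refine ⟨fun c f => ?_⟩
    rw [norm_def, norm_def]
    show Real.sqrt ‖inn (fun x => c • f.1 x) (fun x => c • f.1 x)‖
      ≤ ‖c‖ * Real.sqrt ‖inn f.1 f.1‖
    rw [csmul_eq_dualAct, hB.self_act]
    have e : star (c • (1:A)) * inn f.1 f.1 * (c • (1:A))
        = (c * star c) • inn f.1 f.1 := by
      rw [star_smul, star_one, smul_mul_assoc, mul_smul_comm, one_mul, mul_one, smul_smul]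
    rw [e, norm_smul, Real.sqrt_mul (norm_nonneg _)]
    have e2 : Real.sqrt ‖c * star c‖ = ‖c‖ := by
      rw [norm_mul, norm_star, Real.sqrt_mul_self (norm_nonneg _)]
    rw [e2]
  letI : CompleteSpace (DN inn) := by
    apply Metric.complete_of_cauchySeq_tendsto
    intro u hu
    rw [Metric.cauchySeq_iff] at hu
    have hcau : ∀ ε : ℝ, 0 < ε → ∃ N, ∀ p q, N ≤ p → N ≤ q →
        ‖inn ((fun n => (u n).1) p - (fun n => (u n).1) q)
          ((fun n => (u n).1) p - (fun n => (u n).1) q)‖ < ε := by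
      intro ε hε
      obtain ⟨N, hN⟩ := hu (Real.sqrt ε) (Real.sqrt_pos.mpr hε)
      refine ⟨N, fun p q hp hq => ?_⟩
      have h1 := hN p hp q hq
      rw [dist_eq_norm] at h1
      have h2 : ‖u p - u q‖ = Real.sqrt ‖inn ((u p).1 - (u q).1) ((u p).1 - (u q).1)‖ := rfl
      rw [h2] at h1
      have h3 : ‖inn ((u p).1 - (u q).1) ((u p).1 - (u q).1)‖
          = (Real.sqrt ‖inn ((u p).1 - (u q).1) ((u p).1 - (u q).1)‖) ^ 2 :=
        (Real.sq_sqrt (norm_nonneg _)).symm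
      calc ‖inn ((u p).1 - (u q).1) ((u p).1 - (u q).1)‖
          = (Real.sqrt ‖inn ((u p).1 - (u q).1) ((u p).1 - (u q).1)‖) ^ 2 := h3
        _ < (Real.sqrt ε) ^ 2 := by
          apply pow_lt_pow_left₀ h1 (Real.sqrt_nonneg _)
          norm_num
        _ = ε := Real.sq_sqrt hε.le
    obtain ⟨g, hgd, hconv⟩ := h.complete (fun n => (u n).1) (fun n => (u n).2) hcau
    refine ⟨⟨g, hgd⟩, ?_⟩
    refine tendsto_iff_dist_tendsto_zero.mpr ?_
    have hdist : ∀ n, dist (u n) (⟨g, hgd⟩ : DN inn)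
        = Real.sqrt ‖inn ((u n).1 - g) ((u n).1 - g)‖ := fun n => by
      exact (dist_eq_norm _ _).trans rfl
    simp_rw [hdist]
    have := (Real.continuous_sqrt.tendsto 0).comp hconv
    simpa [Real.sqrt_zero, Function.comp_def] using this
  -- the identity map as a continuous linear map
  let l : DN inn →ₗ[ℂ] DOp A E :=
    { toFun := fun f => f
      map_add' := fun _ _ => rfl
      map_smul' := fun _ _ => rfl }
  let J : DN inn →L[ℂ] DOp A E := l.mkContinuous 1 (fun f => by
    rw [one_mul, norm_def]
    show dualNorm f.1 ≤ Real.sqrt ‖inn f.1 f.1‖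
    exact hB.dualNorm_le_sqrt f.2)
  have hsurj : Function.Surjective J := fun y => ⟨y, rfl⟩
  obtain ⟨C, hC0, hC⟩ := ContinuousLinearMap.exists_preimage_norm_le J hsurj
  refine ⟨C, hC0, fun f hf => ?_⟩
  obtain ⟨x, hx, hb⟩ := hC (⟨f, hf⟩ : DOp A E)
  have hval : x.1 = f := congrArg Subtype.val hx
  rw [norm_def, hval] at hb
  exact hb

end Banach

section OrderLemma
variable {A : Type*} [CStarAlgebra A] [PartialOrder A] [StarOrderedRing A]

lemma one_nonneg' : (0:A) ≤ 1 := by simpa using star_mul_self_nonneg (1:A)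

lemma norm_one_le' : ‖(1:A)‖ ≤ 1 := by
  have h : ‖(1:A)‖ * ‖(1:A)‖ = ‖(1:A)‖ := by
    have := CStarRing.norm_star_mul_self (x := (1:A))
    simpa using this.symm
  nlinarith [norm_nonneg (1:A)]

lemma le_smul_of_norm_conj {p r : A} (hp : 0 ≤ p) (hr : 0 ≤ r) {c : ℝ} (hc : 0 ≤ c)
    (H : ∀ a : A, ‖star a * p * a‖ ≤ c * ‖star a * r * a‖) : p ≤ c • r := by
  have hrsa : IsSelfAdjoint r := .of_nonneg hr
  suffices hδ : ∀ δ : ℝ, 0 < δ → p ≤ c • r + (c * δ) • 1 by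
    have h1 : Filter.Tendsto (fun n : ℕ => c * (1/(n+1:ℝ))) Filter.atTop (nhds 0) := by
      have := tendsto_one_div_add_atTop_nhds_zero_nat (𝕜 := ℝ)
      simpa using (this.const_mul c)
    have h2 : Filter.Tendsto (fun n : ℕ => c • r + (c * (1/(n+1:ℝ))) • (1:A))
        Filter.atTop (nhds (c • r)) := by
      have h3 := h1.smul_const (1:A)
      rw [zero_smul] at h3
      simpa using tendsto_const_nhds.add h3
    exact le_of_tendsto_of_tendsto' tendsto_const_nhds h2
      (fun n => hδ _ (by positivity))
  intro δ hδ0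
  have hspec : ∀ x ∈ spectrum ℝ r, 0 ≤ x := fun x hx => spectrum_nonneg_of_nonneg hr hx
  have hcont' : ContinuousOn (fun x : ℝ => Real.sqrt (x + δ)) (spectrum ℝ r) :=
    (Real.continuous_sqrt.comp (continuous_id.add continuous_const)).continuousOn
  have hcont : ContinuousOn (fun x : ℝ => (Real.sqrt (x + δ))⁻¹) (spectrum ℝ r) :=
    hcont'.inv₀ (fun x hx => ne_of_gt (Real.sqrt_pos.mpr (by linarith [hspec x hx])))
  set b := cfc (fun x : ℝ => (Real.sqrt (x + δ))⁻¹) r with hb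
  set b' := cfc (fun x : ℝ => Real.sqrt (x + δ)) r with hb'
  have hbsa : IsSelfAdjoint b := cfc_predicate _ r
  have hb'sa : IsSelfAdjoint b' := cfc_predicate _ r
  have hbb' : b * b' = 1 := by
    rw [hb, hb', ← cfc_mul _ _ r hcont hcont']
    rw [cfc_congr (g := fun _ : ℝ => (1:ℝ)) (fun x hx => by
      field_simp [ne_of_gt (Real.sqrt_pos.mpr (by linarith [hspec x hx] : (0:ℝ) < x + δ))])]
    rw [cfc_const 1 r hrsa, map_one]
  have hb'b : b' * b = 1 := by
    rw [hb, hb', ← cfc_mul _ _ r hcont' hcont]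
    rw [cfc_congr (g := fun _ : ℝ => (1:ℝ)) (fun x hx => by
      field_simp [ne_of_gt (Real.sqrt_pos.mpr (by linarith [hspec x hx] : (0:ℝ) < x + δ))])]
    rw [cfc_const 1 r hrsa, map_one]
  have hb'b' : b' * b' = r + δ • 1 := by
    rw [hb', ← cfc_mul _ _ r hcont' hcont']
    have e : (spectrum ℝ r).EqOn (fun x => Real.sqrt (x + δ) * Real.sqrt (x + δ))
        (fun x => x + δ) := fun x hx => by
      simp only
      rw [Real.mul_self_sqrt (by linarith [hspec x hx])]
    rw [cfc_congr e]
    have e2 : cfc (fun x : ℝ => x + δ) r = cfc (id : ℝ → ℝ) r + cfc (fun _ : ℝ => δ) r := by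
      rw [← cfc_add r _ _ continuousOn_id (continuousOn_const)]
      rfl
    rw [e2, cfc_id ℝ r hrsa, cfc_const δ r hrsa, Algebra.algebraMap_eq_smul_one]
  -- ‖b * r * b‖ ≤ 1
  have hbrb_le : b * r * b ≤ 1 := by
    have h4 : r ≤ r + δ • 1 :=
      le_add_of_nonneg_right (rsmul_nonneg hδ0.le one_nonneg')
    have h5 := star_left_conjugate_le_conjugate h4 b
    rw [hbsa.star_eq] at h5
    have h6 : b * (r + δ • 1) * b = 1 := by
      rw [← hb'b']
      have e7 : b * (b' * b') * b = (b * b') * (b' * b) := by simp only [mul_assoc]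
      rw [e7, hbb', hb'b, one_mul]
    rwa [h6] at h5
  have hbrb_nn : (0:A) ≤ b * r * b := by
    have := star_left_conjugate_nonneg hr b
    rwa [hbsa.star_eq] at this
  have hnorm_brb : ‖b * r * b‖ ≤ 1 :=
    le_trans (CStarAlgebra.norm_le_norm_of_nonneg_of_le hbrb_nn hbrb_le) norm_one_le'
  -- ‖b * p * b‖ ≤ c
  have h1 : ‖b * p * b‖ ≤ c := by
    have := H b
    rw [hbsa.star_eq] at this
    calc ‖b * p * b‖ ≤ c * ‖b * r * b‖ := this
      _ ≤ c * 1 := mul_le_mul_of_nonneg_left hnorm_brb hc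
      _ = c := mul_one c
  -- b * p * b ≤ c • 1
  have hbpb_sa : IsSelfAdjoint (b * p * b) := by
    have hpsa : IsSelfAdjoint p := .of_nonneg hp
    rw [IsSelfAdjoint, star_mul, star_mul, hbsa.star_eq, hpsa.star_eq, mul_assoc]
  have h2 : b * p * b ≤ c • 1 := by
    calc b * p * b ≤ algebraMap ℝ A ‖b * p * b‖ := hbpb_sa.le_algebraMap_norm_self
      _ ≤ c • 1 := by
        rw [Algebra.algebraMap_eq_smul_one]
        have : (0:A) ≤ (c - ‖b * p * b‖) • (1:A) :=
          rsmul_nonneg (by linarith) one_nonneg'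
        rw [sub_smul] at this
        exact sub_nonneg.mp this
  -- conjugate by b'
  have h3 := star_left_conjugate_le_conjugate h2 b'
  rw [hb'sa.star_eq] at h3
  have e4 : b' * (b * p * b) * b' = p := by
    have e8 : b' * (b * p * b) * b' = (b' * b) * p * (b * b') := by
      simp only [mul_assoc]
    rw [e8, hb'b, hbb', one_mul, mul_one]
  have e5 : b' * (c • (1:A)) * b' = c • r + (c * δ) • 1 := by
    rw [mul_smul_comm, smul_mul_assoc, mul_one, hb'b', smul_add, smul_smul]
  rw [e4, e5] at h3
  exact h3

end OrderLemma

section Main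
variable {A : Type*} [CStarAlgebra A] [PartialOrder A] [StarOrderedRing A]
variable {E : Type*} [NormedAddCommGroup E] [NormedSpace ℂ E] [SMul Aᵐᵒᵖ E] [CStarModuleRight A E]

/-- The interpolated form between two dual inner products. -/
noncomputable def midForm (inn₁ inn₂ : (E → A) → (E → A) → A) (t : ℝ) :
    (E → A) → (E → A) → A :=
  fun f g => inn₁ f g + t • (inn₂ f g - inn₁ f g)

lemma midForm_good {inn₁ inn₂ : (E → A) → (E → A) → A}
    (h₁ : IsDualInner inn₁) (h₂ : IsDualInner inn₂) (t : ℝ)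
    (hnn : ∀ g : E → A, IsDualFunctional g → 0 ≤ midForm inn₁ inn₂ t g g) :
    GoodForm (midForm inn₁ inn₂ t) := by
  constructor
  · intro f g h
    show inn₁ f (g + h) + t • (inn₂ f (g + h) - inn₁ f (g + h)) = _
    rw [h₁.add_right, h₂.add_right]
    show _ = (inn₁ f g + t • (inn₂ f g - inn₁ f g)) + (inn₁ f h + t • (inn₂ f h - inn₁ f h))
    module
  · intro f g a
    show inn₁ f (dualAct g a) + t • (inn₂ f (dualAct g a) - inn₁ f (dualAct g a)) = _
    rw [h₁.act_right, h₂.act_right]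
    show _ = (inn₁ f g + t • (inn₂ f g - inn₁ f g)) * a
    rw [add_mul, smul_mul_assoc, sub_mul]
  · intro f g
    show star (inn₁ f g + t • (inn₂ f g - inn₁ f g)) = _
    rw [star_add, star_smul, star_sub, h₁.star_inn, h₂.star_inn, star_trivial]
    rfl
  · exact hnn
  · intro f hf m
    show f m = inn₁ (mhat m) f + t • (inn₂ (mhat m) f - inn₁ (mhat m) f)
    rw [← h₁.eval f hf m, ← h₂.eval f hf m]
    simp

lemma inner_self_le {inn₁ inn₂ : (E → A) → (E → A) → A}
    (h₁ : IsDualInner inn₁) (h₂ : IsDualInner inn₂) :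
    ∀ f : E → A, IsDualFunctional f → inn₁ f f ≤ inn₂ f f := by
  obtain ⟨K, hK0, hKb⟩ := exists_opbound h₁
  set c : ℝ := K ^ 2 + 1 with hcdef
  have hc1 : 1 < c := by nlinarith
  set ρ : ℝ := c / (c - 1) with hρdef
  have hρ1 : 1 < ρ := by
    rw [hρdef, lt_div_iff₀ (by linarith)]
    linarith
  have hρ0 : 0 < ρ := by linarith
  set P : ℝ → Prop :=
    fun t => ∀ g : E → A, IsDualFunctional g →
      0 ≤ inn₁ g g + t • (inn₂ g g - inn₁ g g) with hPdef
  have hP1 : P 1 := by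
    intro g hg
    have := h₂.nonneg g hg
    rwa [one_smul, add_sub_cancel]
  have hstep : ∀ t : ℝ, 0 < t → P t → P (ρ * t) := by
    intro t ht hPt g hg
    have hGt : GoodForm (midForm inn₁ inn₂ t) := midForm_good h₁ h₂ t hPt
    have hr0 : (0:A) ≤ inn₁ g g + t • (inn₂ g g - inn₁ g g) := hPt g hg
    have hple : inn₁ g g ≤ c • (inn₁ g g + t • (inn₂ g g - inn₁ g g)) := by
      apply le_smul_of_norm_conj (h₁.nonneg g hg) hr0 (by positivity)
      intro a
      have e1 : star a * inn₁ g g * a = inn₁ (dualAct g a) (dualAct g a) :=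
        (h₁.good.self_act g a).symm
      have e2 : star a * (inn₁ g g + t • (inn₂ g g - inn₁ g g)) * a
          = midForm inn₁ inn₂ t (dualAct g a) (dualAct g a) := (hGt.self_act g a).symm
      rw [e1, e2]
      have hdual : IsDualFunctional (dualAct g a) := hg.dualAct a
      have s1 : Real.sqrt ‖inn₁ (dualAct g a) (dualAct g a)‖ ≤ K * dualNorm (dualAct g a) :=
        hKb _ hdual
      have s2 : dualNorm (dualAct g a)
          ≤ Real.sqrt ‖midForm inn₁ inn₂ t (dualAct g a) (dualAct g a)‖ :=
        hGt.dualNorm_le_sqrt hdual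
      have n1 : ‖inn₁ (dualAct g a) (dualAct g a)‖
          = (Real.sqrt ‖inn₁ (dualAct g a) (dualAct g a)‖) ^ 2 :=
        (Real.sq_sqrt (norm_nonneg _)).symm
      have n2 : ‖midForm inn₁ inn₂ t (dualAct g a) (dualAct g a)‖
          = (Real.sqrt ‖midForm inn₁ inn₂ t (dualAct g a) (dualAct g a)‖) ^ 2 :=
        (Real.sq_sqrt (norm_nonneg _)).symm
      rw [n1, n2]
      have hd0 : 0 ≤ dualNorm (dualAct g a) := dualNorm_nonneg _
      have hs0 : 0 ≤ Real.sqrt ‖midForm inn₁ inn₂ t (dualAct g a) (dualAct g a)‖ :=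
        Real.sqrt_nonneg _
      have t1 : (Real.sqrt ‖inn₁ (dualAct g a) (dualAct g a)‖) ^ 2
          ≤ (K * dualNorm (dualAct g a)) ^ 2 :=
        pow_le_pow_left₀ (Real.sqrt_nonneg _) s1 2
      have t3 : (dualNorm (dualAct g a)) ^ 2
          ≤ (Real.sqrt ‖midForm inn₁ inn₂ t (dualAct g a) (dualAct g a)‖) ^ 2 :=
        pow_le_pow_left₀ hd0 s2 2
      have t4 := mul_le_mul_of_nonneg_left t3 (sq_nonneg K)
      have t5 : (K * dualNorm (dualAct g a)) ^ 2 = K ^ 2 * (dualNorm (dualAct g a)) ^ 2 := by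
        ring
      nlinarith [sq_nonneg (Real.sqrt ‖midForm inn₁ inn₂ t (dualAct g a) (dualAct g a)‖)]
    -- now extrapolate
    have hkey : inn₁ g g + (ρ * t) • (inn₂ g g - inn₁ g g)
        = ρ • (inn₁ g g + t • (inn₂ g g - inn₁ g g)) - (ρ - 1) • inn₁ g g := by
      module
    rw [hkey, sub_nonneg]
    calc (ρ - 1) • inn₁ g g
        ≤ (ρ - 1) • (c • (inn₁ g g + t • (inn₂ g g - inn₁ g g))) :=
          rsmul_le_rsmul (by linarith) hple
      _ = ρ • (inn₁ g g + t • (inn₂ g g - inn₁ g g)) := by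
          rw [smul_smul]
          congr 1
          have hne : c - 1 ≠ 0 := by linarith
          rw [hρdef]
          field_simp
          ring
  have hPn : ∀ n : ℕ, P (ρ ^ n) := by
    intro n
    induction n with
    | zero => simpa using hP1
    | succ n ih =>
      have := hstep (ρ ^ n) (pow_pos hρ0 n) ih
      rwa [show ρ * ρ ^ n = ρ ^ (n + 1) by rw [pow_succ]; ring] at this
  intro f hf
  have hfin : ∀ n : ℕ, (0:A) ≤ (ρ ^ n)⁻¹ • inn₁ f f + (inn₂ f f - inn₁ f f) := by
    intro n
    have h8 := hPn n f hf
    have h9 : (ρ ^ n)⁻¹ • (inn₁ f f + (ρ ^ n) • (inn₂ f f - inn₁ f f))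
        = (ρ ^ n)⁻¹ • inn₁ f f + (inn₂ f f - inn₁ f f) := by
      rw [smul_add, smul_smul, inv_mul_cancel₀ (ne_of_gt (pow_pos hρ0 n)), one_smul]
    rw [← h9]
    exact rsmul_nonneg (by positivity) h8
  have hlim : Filter.Tendsto (fun n : ℕ => (ρ ^ n)⁻¹ • inn₁ f f + (inn₂ f f - inn₁ f f))
      Filter.atTop (nhds (inn₂ f f - inn₁ f f)) := by
    have h10 : Filter.Tendsto (fun n : ℕ => (ρ ^ n)⁻¹) Filter.atTop (nhds 0) := by
      simp_rw [← inv_pow]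
      exact tendsto_pow_atTop_nhds_zero_of_lt_one (by positivity)
        (by rw [inv_lt_one_iff₀]; right; exact hρ1)
    have h11 := h10.smul_const (inn₁ f f)
    rw [zero_smul] at h11
    simpa using h11.add (tendsto_const_nhds (α := ℕ) (x := inn₂ f f - inn₁ f f))
  have h12 : (0:A) ≤ inn₂ f f - inn₁ f f :=
    le_of_tendsto_of_tendsto' tendsto_const_nhds hlim hfin
  exact sub_nonneg.mp h12

lemma inner_self_eq {inn₁ inn₂ : (E → A) → (E → A) → A}
    (h₁ : IsDualInner inn₁) (h₂ : IsDualInner inn₂) :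
    ∀ f : E → A, IsDualFunctional f → inn₁ f f = inn₂ f f := fun f hf =>
  le_antisymm (inner_self_le h₁ h₂ f hf) (inner_self_le h₂ h₁ f hf)

end Main

section Final
variable {A : Type*} [CStarAlgebra A] [PartialOrder A] [StarOrderedRing A]
variable {E : Type*} [NormedAddCommGroup E] [NormedSpace ℂ E] [SMul Aᵐᵒᵖ E] [CStarModuleRight A E]

lemma cancel_mid {a b x y x' y' : A} (h : a + x + y + b = a + x' + y' + b) :
    x + y = x' + y' := by
  have h5 := add_right_cancel h
  rw [add_assoc, add_assoc] at h5
  exact add_left_cancel h5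

theorem dualInner_unique' (inn₁ inn₂ : (E → A) → (E → A) → A)
    (h₁ : IsDualInner inn₁) (h₂ : IsDualInner inn₂) :
    ∀ f g : E → A, IsDualFunctional f → IsDualFunctional g → inn₁ f g = inn₂ f g := by
  intro f g hf hg
  have hself := inner_self_eq h₁ h₂
  have E1 : inn₁ f g + inn₁ g f = inn₂ f g + inn₂ g f := by
    have h1 := hself (f + g) (hf.add hg)
    rw [h₁.good.expand_sq, h₂.good.expand_sq, hself f hf, hself g hg] at h1
    exact cancel_mid h1
  have hgi : IsDualFunctional (dualAct g (Complex.I • (1:A))) := hg.dualAct _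
  have comp : ∀ (inn : (E → A) → (E → A) → A), IsDualInner inn →
      inn (f + dualAct g (Complex.I • (1:A))) (f + dualAct g (Complex.I • (1:A)))
      = inn f f + Complex.I • inn f g + (-(Complex.I • inn g f)) + inn g g := by
    intro inn h
    rw [h.good.expand_sq]
    have c1 : inn f (dualAct g (Complex.I • (1:A))) = Complex.I • inn f g := by
      rw [h.act_right, mul_smul_comm, mul_one]
    have c2 : inn (dualAct g (Complex.I • (1:A))) f = -(Complex.I • inn g f) := by
      rw [h.good.act_left, star_smul, star_one, smul_mul_assoc, one_mul, Complex.star_def,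
        Complex.conj_I, neg_smul]
    have c3 : inn (dualAct g (Complex.I • (1:A))) (dualAct g (Complex.I • (1:A)))
        = inn g g := by
      rw [h.good.act_pair]
      have e : star (Complex.I • (1:A)) * inn g g * (Complex.I • (1:A))
          = (Complex.I * star Complex.I) • inn g g := by
        rw [star_smul, star_one, smul_mul_assoc, mul_smul_comm, one_mul, mul_one, smul_smul,
          mul_comm]
      rw [e, Complex.star_def, Complex.conj_I, mul_neg, Complex.I_mul_I, neg_neg, one_smul]
    rw [c1, c2, c3]
  have E2' := hself (f + dualAct g (Complex.I • (1:A))) (hf.add hgi)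
  rw [comp inn₁ h₁, comp inn₂ h₂, hself f hf, hself g hg] at E2'
  have E2 : Complex.I • inn₁ f g + (-(Complex.I • inn₁ g f))
      = Complex.I • inn₂ f g + (-(Complex.I • inn₂ g f)) := cancel_mid E2'
  have E1' : Complex.I • inn₁ f g + Complex.I • inn₁ g f
      = Complex.I • inn₂ f g + Complex.I • inn₂ g f := by
    have := congrArg (fun z => Complex.I • z) E1
    simpa [smul_add] using this
  have E3 : Complex.I • inn₁ f g + Complex.I • inn₁ f g
      = Complex.I • inn₂ f g + Complex.I • inn₂ f g := by
    have h6 : (Complex.I • inn₁ f g + Complex.I • inn₁ g f)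
        + (Complex.I • inn₁ f g + (-(Complex.I • inn₁ g f)))
        = Complex.I • inn₁ f g + Complex.I • inn₁ f g := by abel
    have h7 : (Complex.I • inn₂ f g + Complex.I • inn₂ g f)
        + (Complex.I • inn₂ f g + (-(Complex.I • inn₂ g f)))
        = Complex.I • inn₂ f g + Complex.I • inn₂ f g := by abel
    rw [← h6, ← h7, E1', E2]
  have E4 : Complex.I • inn₁ f g = Complex.I • inn₂ f g := by
    have h8 : (2:ℂ) • (Complex.I • inn₁ f g) = (2:ℂ) • (Complex.I • inn₂ f g) := by
      rw [two_smul, two_smul]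
      exact E3
    have h9 := congrArg (fun z => ((2:ℂ)⁻¹) • z) h8
    simpa [smul_smul, inv_mul_cancel₀ (two_ne_zero (α := ℂ))] using h9
  have h10 := congrArg (fun z => ((Complex.I)⁻¹) • z) E4
  simpa [smul_smul, inv_mul_cancel₀ Complex.I_ne_zero] using h10

end Final


variable {A : Type*} [CStarAlgebra A] [PartialOrder A] [StarOrderedRing A]
variable {E : Type*} [NormedAddCommGroup E] [NormedSpace ℂ E] [SMul Aᵐᵒᵖ E] [CStarModuleRight A E]

/-- If `M` is a Hilbert C*-module with a Hilbert dual, the extension of the inner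
product from `M` to `M'` is unique: any two extensions coincide (on dual functionals). -/
theorem dualInner_unique (inn₁ inn₂ : (E → A) → (E → A) → A)
    (h₁ : IsDualInner inn₁) (h₂ : IsDualInner inn₂) :
    ∀ f g : E → A, IsDualFunctional f → IsDualFunctional g → inn₁ f g = inn₂ f g :=
  dualInner_unique' inn₁ inn₂ h₁ h₂
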